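/- For density matrices ρ and σ on ℂ^d and every α ∈ [0,1], the optimal type-II error satisfies β_α(ρ,σ) = sup_{t ≥ 0} { Tr[σ Π_t] + t (Tr[ρ (I − Π_t)] − α) }, where Π_t denotes the orthogonal projection onto the span of the eigenvectors of the Hermitian matrix tρ − σ with nonnegative eigenvalues. -/

import Mathlib

open Matrix MeasureTheory BigOperators ComplexOrder

set_option maxHeartbeats 1000000
noncomputable section

/-- The optimal quantum type-II error trade-off: infimum of `1 - Tr[Πσ]` over
tests `0 ⪯ Π ⪯ I` with type-I error `Tr[Πρ] ≤ α`. -/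
def qBeta {d : ℕ} (α : ℝ) (ρ σ : Matrix (Fin d) (Fin d) ℂ) : ℝ :=
  sInf { b : ℝ | ∃ T : Matrix (Fin d) (Fin d) ℂ,
    T.PosSemidef ∧ (1 - T).PosSemidef ∧ ((T * ρ).trace.re ≤ α) ∧
    b = 1 - (T * σ).trace.re }

/-- The orthogonal projection onto the span of the eigenvectors of a Hermitian
matrix `A` with nonnegative eigenvalues (defined as `0` if `A` is not Hermitian). -/
def nonnegProj {d : ℕ} (A : Matrix (Fin d) (Fin d) ℂ) : Matrix (Fin d) (Fin d) ℂ :=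
  if hA : A.IsHermitian then
    (hA.eigenvectorUnitary : Matrix (Fin d) (Fin d) ℂ) *
      Matrix.diagonal (fun i => if 0 ≤ hA.eigenvalues i then (1 : ℂ) else 0) *
      star (hA.eigenvectorUnitary : Matrix (Fin d) (Fin d) ℂ)
  else 0

namespace QNP
variable {d : ℕ}

section spec
variable {B : Matrix (Fin d) (Fin d) ℂ} (hB : B.IsHermitian)

def evU (hB : B.IsHermitian) : Matrix (Fin d) (Fin d) ℂ := hB.eigenvectorUnitary

lemma evU_star_mul : star (evU hB) * evU hB = 1 :=
  Matrix.mem_unitaryGroup_iff'.mp hB.eigenvectorUnitary.2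

lemma evU_mul_star : evU hB * star (evU hB) = 1 :=
  Matrix.mem_unitaryGroup_iff.mp hB.eigenvectorUnitary.2

def conjM (hB : B.IsHermitian) (M : Matrix (Fin d) (Fin d) ℂ) : Matrix (Fin d) (Fin d) ℂ :=
  star (evU hB) * M * evU hB

lemma conjM_A : conjM hB B = diagonal (fun i => (hB.eigenvalues i : ℂ)) := by
  have := hB.conjStarAlgAut_star_eigenvectorUnitary
  simp [conjM, evU, Function.comp] at this
  exact this

lemma conjM_posSemidef {M : Matrix (Fin d) (Fin d) ℂ} (hM : M.PosSemidef) :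
    (conjM hB M).PosSemidef := by
  have := hM.conjTranspose_mul_mul_same (B := evU hB)
  simpa [conjM, Matrix.star_eq_conjTranspose] using this

lemma conjM_one : conjM hB 1 = 1 := by
  simp [conjM, evU_star_mul hB]

lemma conjM_sub (M N : Matrix (Fin d) (Fin d) ℂ) :
    conjM hB (M - N) = conjM hB M - conjM hB N := by
  simp [conjM, Matrix.mul_sub, Matrix.sub_mul]

lemma conjM_mul (M N : Matrix (Fin d) (Fin d) ℂ) :
    conjM hB (M * N) = conjM hB M * conjM hB N := by
  simp only [conjM]
  have h : star (evU hB) * M * evU hB * (star (evU hB) * N * evU hB)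
      = star (evU hB) * M * (evU hB * star (evU hB)) * N * evU hB := by noncomm_ring
  rw [h, evU_mul_star hB]
  noncomm_ring

lemma conjM_trace (M : Matrix (Fin d) (Fin d) ℂ) : (conjM hB M).trace = M.trace := by
  rw [conjM, Matrix.trace_mul_cycle, evU_mul_star hB, one_mul]

/-- main trace formula : Tr (S B) = ∑ i (U* S U)_ii λ_i -/
lemma trace_mul_herm (S : Matrix (Fin d) (Fin d) ℂ) :
    (S * B).trace = ∑ i, conjM hB S i i * (hB.eigenvalues i : ℂ) := by
  rw [← conjM_trace hB (S * B), conjM_mul, conjM_A]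
  simp [Matrix.trace, Matrix.diag, Matrix.mul_diagonal]

end spec
end QNP

namespace QNP
open QNP
variable {d : ℕ}
section spec2
variable {B : Matrix (Fin d) (Fin d) ℂ} (hB : B.IsHermitian)

/-- weight of `M` in the `i`-th eigenvector of `B` -/
def wgt (hB : B.IsHermitian) (M : Matrix (Fin d) (Fin d) ℂ) (i : Fin d) : ℝ :=
  (conjM hB M i i).re

def IsTest (T : Matrix (Fin d) (Fin d) ℂ) : Prop := T.PosSemidef ∧ (1 - T).PosSemidef

lemma psd_diag {N : Matrix (Fin d) (Fin d) ℂ} (hN : N.PosSemidef) (i : Fin d) :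
    0 ≤ N i i := by
  have := hN.dotProduct_mulVec_nonneg (Pi.single i 1)
  simpa [Matrix.mulVec_single, dotProduct, Pi.single_apply, Finset.sum_ite_eq,
    mulVec, dotProduct] using this

lemma psd_diag_re {N : Matrix (Fin d) (Fin d) ℂ} (hN : N.PosSemidef) (i : Fin d) :
    0 ≤ (N i i).re := by
  have := psd_diag hN i; rw [Complex.le_def] at this; simpa using this.1

lemma wgt_nonneg {M : Matrix (Fin d) (Fin d) ℂ} (hM : M.PosSemidef) (i : Fin d) :
    0 ≤ wgt hB M i := psd_diag_re (conjM_posSemidef hB hM) i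

lemma wgt_le_one {T : Matrix (Fin d) (Fin d) ℂ} (hT : IsTest T) (i : Fin d) :
    wgt hB T i ≤ 1 := by
  have h1 : (conjM hB (1 - T)).PosSemidef := conjM_posSemidef hB hT.2
  rw [conjM_sub, conjM_one] at h1
  have := psd_diag_re h1 i
  simp only [Matrix.sub_apply, Matrix.one_apply_eq, Complex.sub_re, Complex.one_re] at this
  unfold wgt; linarith

lemma sum_wgt (M : Matrix (Fin d) (Fin d) ℂ) : ∑ i, wgt hB M i = M.trace.re := by
  have := conjM_trace hB M
  have h2 : (conjM hB M).trace.re = M.trace.re := by rw [this]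
  rw [← h2, Matrix.trace]
  simp [wgt, Matrix.diag, Complex.re_sum]

lemma trace_mul_herm_re (S : Matrix (Fin d) (Fin d) ℂ) :
    ((S * B).trace).re = ∑ i, wgt hB S i * hB.eigenvalues i := by
  rw [trace_mul_herm hB S, Complex.re_sum]
  congr 1; ext i
  simp [wgt, Complex.mul_re]

lemma trace_test_le {T : Matrix (Fin d) (Fin d) ℂ} (hT : IsTest T) :
    ((T * B).trace).re ≤ ∑ i, max (hB.eigenvalues i) 0 := by
  rw [trace_mul_herm_re hB T]
  apply Finset.sum_le_sum
  intro i _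
  rcases le_or_gt 0 (hB.eigenvalues i) with h | h
  · calc wgt hB T i * hB.eigenvalues i ≤ 1 * hB.eigenvalues i := by
          apply mul_le_mul_of_nonneg_right (wgt_le_one hB hT i) h
       _ = hB.eigenvalues i := one_mul _
       _ ≤ max (hB.eigenvalues i) 0 := le_max_left _ _
  · calc wgt hB T i * hB.eigenvalues i ≤ 0 := by
          apply mul_nonpos_of_nonneg_of_nonpos (wgt_nonneg hB hT.1 i) h.le
       _ ≤ max (hB.eigenvalues i) 0 := le_max_right _ _

/-- test diagonal in the eigenbasis of `B` -/
def uDiag (hB : B.IsHermitian) (c : Fin d → ℝ) : Matrix (Fin d) (Fin d) ℂ :=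
  evU hB * diagonal (fun i => (c i : ℂ)) * star (evU hB)

lemma uDiag_sub (c c' : Fin d → ℝ) : uDiag hB c - uDiag hB c' = uDiag hB (c - c') := by
  simp [uDiag, ← Matrix.sub_mul, ← Matrix.mul_sub, diagonal_sub]

lemma uDiag_one : uDiag hB (fun _ => 1) = 1 := by
  simp [uDiag, Matrix.diagonal_one, evU_mul_star hB]

lemma uDiag_posSemidef {c : Fin d → ℝ} (hc : ∀ i, 0 ≤ c i) : (uDiag hB c).PosSemidef := by
  have hd : (diagonal (fun i => (c i : ℂ))).PosSemidef := by
    apply Matrix.PosSemidef.diagonal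
    intro i
    simpa using Complex.zero_le_real.2 (hc i)
  have := hd.mul_mul_conjTranspose_same (B := evU hB)
  simpa [uDiag, Matrix.star_eq_conjTranspose] using this

lemma uDiag_isTest {c : Fin d → ℝ} (hc : ∀ i, 0 ≤ c i) (hc1 : ∀ i, c i ≤ 1) :
    IsTest (uDiag hB c) := by
  refine ⟨uDiag_posSemidef hB hc, ?_⟩
  have : (1 : Matrix (Fin d) (Fin d) ℂ) - uDiag hB c = uDiag hB ((fun _ => 1) - c) := by
    rw [← uDiag_one hB, uDiag_sub]
  rw [this]
  exact uDiag_posSemidef hB (fun i => by simpa using hc1 i)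

lemma conjM_uDiag (c : Fin d → ℝ) :
    conjM hB (uDiag hB c) = diagonal (fun i => (c i : ℂ)) := by
  simp only [conjM, uDiag]
  rw [show star (evU hB) * (evU hB * diagonal (fun i => (c i : ℂ)) * star (evU hB)) * evU hB
      = (star (evU hB) * evU hB) * diagonal (fun i => (c i : ℂ)) * (star (evU hB) * evU hB) by
    noncomm_ring]
  rw [evU_star_mul hB, one_mul, mul_one]

lemma trace_uDiag_mul (c : Fin d → ℝ) (M : Matrix (Fin d) (Fin d) ℂ) :
    ((uDiag hB c * M).trace).re = ∑ i, c i * wgt hB M i := by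
  have h : (uDiag hB c * M).trace = (diagonal (fun i => (c i : ℂ)) * conjM hB M).trace := by
    rw [← conjM_trace hB (uDiag hB c * M), conjM_mul, conjM_uDiag]
  rw [h, Matrix.trace]
  simp only [Matrix.diag, Matrix.diagonal_mul]
  rw [Complex.re_sum]
  congr 1; ext i
  simp [wgt, Complex.mul_re]

lemma wgt_uDiag (c : Fin d → ℝ) (i : Fin d) : wgt hB (uDiag hB c) i = c i := by
  rw [wgt, conjM_uDiag]
  simp

end spec2
end QNP


namespace QNP
variable {d : ℕ}

/-- the 0/1 weight vector of the nonnegative eigenspace -/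
def cP {B : Matrix (Fin d) (Fin d) ℂ} (hB : B.IsHermitian) : Fin d → ℝ :=
  fun i => if 0 ≤ hB.eigenvalues i then 1 else 0

/-- the 0/1 weight vector of the positive eigenspace -/
def cQ {B : Matrix (Fin d) (Fin d) ℂ} (hB : B.IsHermitian) : Fin d → ℝ :=
  fun i => if 0 < hB.eigenvalues i then 1 else 0

lemma nonnegProj_eq {B : Matrix (Fin d) (Fin d) ℂ} (hB : B.IsHermitian) :
    nonnegProj B = uDiag hB (cP hB) := by
  rw [nonnegProj, dif_pos hB, uDiag, evU]
  congr 2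
  ext i
  simp [cP, apply_ite (fun x : ℝ => (x : ℂ))]

section ctx
variable {ρ σ : Matrix (Fin d) (Fin d) ℂ}

lemma hermA (hρ : ρ.PosSemidef) (hσ : σ.PosSemidef) (t : ℝ) : (t • ρ - σ).IsHermitian := by
  have h : (t • ρ - σ)ᴴ = t • ρᴴ - σᴴ := by
    rw [conjTranspose_sub, conjTranspose_smul, star_trivial]
  unfold Matrix.IsHermitian
  rw [h, hρ.1, hσ.1]

lemma conjM_smul_real {B : Matrix (Fin d) (Fin d) ℂ} (hB : B.IsHermitian)
    (t : ℝ) (M : Matrix (Fin d) (Fin d) ℂ) : conjM hB (t • M) = t • conjM hB M := by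
  simp [conjM, Matrix.mul_smul, Matrix.smul_mul]

lemma lam_eq (hρ : ρ.PosSemidef) (hσ : σ.PosSemidef) (t : ℝ) (i : Fin d) :
    (hermA hρ hσ t).eigenvalues i
      = t * wgt (hermA hρ hσ t) ρ i - wgt (hermA hρ hσ t) σ i := by
  set hB := hermA hρ hσ t
  have h := conjM_A hB
  have h2 : conjM hB (t • ρ - σ) i i = ((hB.eigenvalues i : ℝ) : ℂ) := by
    rw [h]; simp
  rw [conjM_sub, conjM_smul_real] at h2
  have h3 := congrArg Complex.re h2
  simpa [wgt, Complex.real_smul, Complex.mul_re] using h3.symm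

end ctx
end QNP

namespace QNP
variable {d : ℕ} {ρ σ : Matrix (Fin d) (Fin d) ℂ}

section ctx2
variable (hρ : ρ.PosSemidef) (hσ : σ.PosSemidef)

/-- rho-weights at parameter t -/
def rr (hρ : ρ.PosSemidef) (hσ : σ.PosSemidef) (t : ℝ) (i : Fin d) : ℝ :=
  wgt (hermA hρ hσ t) ρ i

def ss (hρ : ρ.PosSemidef) (hσ : σ.PosSemidef) (t : ℝ) (i : Fin d) : ℝ :=
  wgt (hermA hρ hσ t) σ i

def cc (hρ : ρ.PosSemidef) (hσ : σ.PosSemidef) (t : ℝ) (i : Fin d) : ℝ :=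
  cP (hermA hρ hσ t) i

def qq (hρ : ρ.PosSemidef) (hσ : σ.PosSemidef) (t : ℝ) (i : Fin d) : ℝ :=
  cQ (hermA hρ hσ t) i

def ll (hρ : ρ.PosSemidef) (hσ : σ.PosSemidef) (t : ℝ) (i : Fin d) : ℝ :=
  (hermA hρ hσ t).eigenvalues i

lemma rr_nonneg (t : ℝ) (i : Fin d) : 0 ≤ rr hρ hσ t i := wgt_nonneg _ hρ i
lemma ss_nonneg (t : ℝ) (i : Fin d) : 0 ≤ ss hρ hσ t i := wgt_nonneg _ hσ i

lemma ll_eq (t : ℝ) (i : Fin d) :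
    ll hρ hσ t i = t * rr hρ hσ t i - ss hρ hσ t i := lam_eq hρ hσ t i


lemma sum_rr (hρtr : ρ.trace = 1) (t : ℝ) : ∑ i, rr hρ hσ t i = 1 := by
  have := sum_wgt (hermA hρ hσ t) ρ
  rw [hρtr] at this
  simpa [rr] using this

lemma sum_ss (hσtr : σ.trace = 1) (t : ℝ) : ∑ i, ss hρ hσ t i = 1 := by
  have := sum_wgt (hermA hρ hσ t) σ
  rw [hσtr] at this
  simpa [ss] using this

/-- trace of the projector against σ in sum form -/
lemma proj_sigma_trace (t : ℝ) :
    ((nonnegProj (t • ρ - σ)) * σ).trace.re = ∑ i, cc hρ hσ t i * ss hρ hσ t i := by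
  rw [nonnegProj_eq (hermA hρ hσ t), trace_uDiag_mul]
  rfl

lemma one_sub_proj (t : ℝ) :
    (1 : Matrix (Fin d) (Fin d) ℂ) - nonnegProj (t • ρ - σ)
      = uDiag (hermA hρ hσ t) ((fun _ => 1) - cc hρ hσ t) := by
  rw [nonnegProj_eq (hermA hρ hσ t), ← uDiag_sub, uDiag_one]
  rfl

lemma proj_rho_trace (t : ℝ) :
    ((1 - nonnegProj (t • ρ - σ)) * ρ).trace.re
      = ∑ i, (1 - cc hρ hσ t i) * rr hρ hσ t i := by
  rw [one_sub_proj hρ hσ, trace_uDiag_mul]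
  rfl

lemma cc_mem (t : ℝ) (i : Fin d) : cc hρ hσ t i = 0 ∨ cc hρ hσ t i = 1 := by
  unfold cc cP; split <;> simp

lemma proj_isTest (hρ : ρ.PosSemidef) (hσ : σ.PosSemidef) (t : ℝ) : IsTest (nonnegProj (t • ρ - σ)) := by
  rw [nonnegProj_eq (hermA hρ hσ t)]
  apply uDiag_isTest <;> intro i <;> rcases cc_mem hρ hσ t i with h | h <;>
    unfold cc at h <;> rw [h] <;> norm_num

/-- max formula: ∑ max λ 0 = ∑ cc * λ -/
lemma sum_max_eq (t : ℝ) :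
    ∑ i, max (ll hρ hσ t i) 0 = ∑ i, cc hρ hσ t i * ll hρ hσ t i := by
  congr 1; ext i
  unfold cc cP ll
  rcases le_or_gt 0 ((hermA hρ hσ t).eigenvalues i) with h | h
  · rw [if_pos h, max_eq_left h, one_mul]
  · rw [if_neg (not_le.2 h), max_eq_right h.le, zero_mul]

end ctx2
end QNP

namespace QNP
variable {d : ℕ} {ρ σ : Matrix (Fin d) (Fin d) ℂ}
section ctx3
variable (hρ : ρ.PosSemidef) (hσ : σ.PosSemidef)

/-- the dual functional in sum form -/
def ff (hρ : ρ.PosSemidef) (hσ : σ.PosSemidef) (α t : ℝ) : ℝ :=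
  (∑ i, cc hρ hσ t i * ss hρ hσ t i)
    + t * ((∑ i, (1 - cc hρ hσ t i) * rr hρ hσ t i) - α)

lemma ff_stmt (α t : ℝ) :
    ((nonnegProj (t • ρ - σ)) * σ).trace.re
        + t * (((1 - nonnegProj (t • ρ - σ)) * ρ).trace.re - α) = ff hρ hσ α t := by
  rw [proj_sigma_trace hρ hσ, proj_rho_trace hρ hσ, ff]

lemma trace_mul_A_re (T : Matrix (Fin d) (Fin d) ℂ) (t : ℝ) :
    ((T * (t • ρ - σ)).trace).re = t * ((T * ρ).trace).re - ((T * σ).trace).re := by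
  rw [Matrix.mul_sub, Matrix.mul_smul, Matrix.trace_sub, Matrix.trace_smul]
  simp [Complex.smul_re]

lemma weak_duality (hρtr : ρ.trace = 1) (hσtr : σ.trace = 1)
    {α : ℝ} {t : ℝ} (ht : 0 ≤ t)
    {T : Matrix (Fin d) (Fin d) ℂ} (hT : IsTest T)
    (hTρ : ((T * ρ).trace).re ≤ α) :
    ff hρ hσ α t ≤ 1 - ((T * σ).trace).re := by
  set hB := hermA hρ hσ t with hBdef
  have h1 : IsTest ((1 : Matrix (Fin d) (Fin d) ℂ) - T) := ⟨hT.2, by simpa using hT.1⟩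
  have key := trace_test_le hB h1
  have hL : (((1 - T) * (t • ρ - σ)).trace).re
      = (t - 1) - (t * ((T * ρ).trace).re - ((T * σ).trace).re) := by
    rw [Matrix.sub_mul, Matrix.one_mul, Matrix.trace_sub, Complex.sub_re,
      trace_mul_A_re]
    have : ((t • ρ - σ).trace).re = t - 1 := by
      rw [Matrix.trace_sub, Matrix.trace_smul, hρtr, hσtr]
      simp [Complex.smul_re]
    rw [this]
  have hR : ∑ i, max (hB.eigenvalues i) 0
      = t * (∑ i, cc hρ hσ t i * rr hρ hσ t i) - ∑ i, cc hρ hσ t i * ss hρ hσ t i := by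
    have h2 : ∑ i, max (hB.eigenvalues i) 0 = ∑ i, cc hρ hσ t i * ll hρ hσ t i :=
      sum_max_eq hρ hσ t
    rw [h2]
    rw [Finset.mul_sum, ← Finset.sum_sub_distrib]
    congr 1; ext i
    rw [ll_eq hρ hσ t i]
    ring
  rw [hL, hR] at key
  have hsum : ∑ i, (1 - cc hρ hσ t i) * rr hρ hσ t i
      = 1 - ∑ i, cc hρ hσ t i * rr hρ hσ t i := by
    have e1 : ∑ i, (1 - cc hρ hσ t i) * rr hρ hσ t i
        = (∑ i, rr hρ hσ t i) - ∑ i, cc hρ hσ t i * rr hρ hσ t i := by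
      rw [← Finset.sum_sub_distrib]
      congr 1; ext i; ring
    rw [e1, sum_rr hρ hσ hρtr t]
  have htx : t * ((T * ρ).trace).re ≤ t * α := mul_le_mul_of_nonneg_left hTρ ht
  rw [ff, hsum]
  nlinarith [key, htx]
end ctx3
end QNP

namespace QNP
variable {d : ℕ} {ρ σ : Matrix (Fin d) (Fin d) ℂ}
section ctx4
variable (hρ : ρ.PosSemidef) (hσ : σ.PosSemidef)

lemma qq_le_cc (t : ℝ) (i : Fin d) : qq hρ hσ t i ≤ cc hρ hσ t i := by
  unfold qq cc cQ cP
  rcases lt_trichotomy ((hermA hρ hσ t).eigenvalues i) 0 with h | h | h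
  · simp [not_lt.2 h.le, not_le.2 h]
  · simp [h]
  · simp [h, h.le]

lemma kernel_ss (t : ℝ) (i : Fin d) :
    (cc hρ hσ t i - qq hρ hσ t i) * ss hρ hσ t i
      = (cc hρ hσ t i - qq hρ hσ t i) * (t * rr hρ hσ t i) := by
  unfold cc qq cP cQ
  rcases lt_trichotomy ((hermA hρ hσ t).eigenvalues i) 0 with h | h | h
  · simp [not_lt.2 h.le, not_le.2 h]
  · have h0 := ll_eq hρ hσ t i
    unfold ll at h0
    rw [h] at h0
    have hts : ss hρ hσ t i = t * rr hρ hσ t i := by linarith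
    simp [h, hts]
  · simp [h, h.le]

lemma achieve_at (hρtr : ρ.trace = 1) (hσtr : σ.trace = 1)
    {α t μ : ℝ} (ht : 0 ≤ t) (hμ0 : 0 ≤ μ) (hμ1 : μ ≤ 1)
    (hμα : (∑ i, (1 - cc hρ hσ t i) * rr hρ hσ t i)
        + μ * (∑ i, (cc hρ hσ t i - qq hρ hσ t i) * rr hρ hσ t i) = α) :
    ∃ T : Matrix (Fin d) (Fin d) ℂ, IsTest T ∧ ((T * ρ).trace).re ≤ α ∧
      1 - ((T * σ).trace).re = ff hρ hσ α t := by
  set hB := hermA hρ hσ t with hBdef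
  set c : Fin d → ℝ := fun i => (1 - cc hρ hσ t i) + μ * (cc hρ hσ t i - qq hρ hσ t i) with hc
  have hcc : ∀ i, cc hρ hσ t i = 0 ∨ cc hρ hσ t i = 1 := cc_mem hρ hσ t
  have hqq : ∀ i, qq hρ hσ t i = 0 ∨ qq hρ hσ t i = 1 := by
    intro i; unfold qq cQ; split <;> simp
  have hc0 : ∀ i, 0 ≤ c i := by
    intro i
    have h1 := qq_le_cc hρ hσ t i
    rcases hcc i with h | h <;> rcases hqq i with h' | h' <;> rw [hc] <;>
      simp [h, h'] <;> nlinarith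
  have hc1 : ∀ i, c i ≤ 1 := by
    intro i
    have h1 := qq_le_cc hρ hσ t i
    rcases hcc i with h | h <;> rcases hqq i with h' | h' <;> rw [hc] <;>
      simp [h, h'] <;> nlinarith
  refine ⟨uDiag hB c, uDiag_isTest hB hc0 hc1, ?_, ?_⟩
  · have h1 : ((uDiag hB c * ρ).trace).re = ∑ i, c i * rr hρ hσ t i :=
      trace_uDiag_mul hB c ρ
    rw [h1]
    have : ∑ i, c i * rr hρ hσ t i
        = (∑ i, (1 - cc hρ hσ t i) * rr hρ hσ t i)
          + μ * (∑ i, (cc hρ hσ t i - qq hρ hσ t i) * rr hρ hσ t i) := by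
      rw [Finset.mul_sum, ← Finset.sum_add_distrib]
      congr 1; ext i; rw [hc]; ring
    rw [this, hμα]
  · have h2 : ((uDiag hB c * σ).trace).re = ∑ i, c i * ss hρ hσ t i :=
      trace_uDiag_mul hB c σ
    rw [h2, ff]
    have hker : ∑ i, (cc hρ hσ t i - qq hρ hσ t i) * ss hρ hσ t i
        = t * ∑ i, (cc hρ hσ t i - qq hρ hσ t i) * rr hρ hσ t i := by
      rw [Finset.mul_sum]
      congr 1; ext i
      rw [kernel_ss hρ hσ t i]; ring
    have hsplit : ∑ i, c i * ss hρ hσ t i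
        = (∑ i, (1 - cc hρ hσ t i) * ss hρ hσ t i)
          + μ * (∑ i, (cc hρ hσ t i - qq hρ hσ t i) * ss hρ hσ t i) := by
      rw [Finset.mul_sum, ← Finset.sum_add_distrib]
      congr 1; ext i; rw [hc]; ring
    have hss1 : ∑ i, (1 - cc hρ hσ t i) * ss hρ hσ t i
        = 1 - ∑ i, cc hρ hσ t i * ss hρ hσ t i := by
      have e1 : ∑ i, (1 - cc hρ hσ t i) * ss hρ hσ t i
          = (∑ i, ss hρ hσ t i) - ∑ i, cc hρ hσ t i * ss hρ hσ t i := by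
        rw [← Finset.sum_sub_distrib]; congr 1; ext i; ring
      rw [e1, sum_ss hρ hσ hσtr t]
    have hαsub : (∑ i, (1 - cc hρ hσ t i) * rr hρ hσ t i) - α
        = - (μ * (∑ i, (cc hρ hσ t i - qq hρ hσ t i) * rr hρ hσ t i)) := by
      linarith [hμα]
    rw [hsplit, hss1, hker, hαsub]
    ring
end ctx4
end QNP

namespace QNP
variable {d : ℕ}

lemma cont_traceMul (C : Matrix (Fin d) (Fin d) ℂ) :
    Continuous fun M : Matrix (Fin d) (Fin d) ℂ => ((M * C).trace).re :=
  Complex.continuous_re.comp ((continuous_id.matrix_mul continuous_const).matrix_trace)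

lemma posSemidef_of_tendsto {x : ℕ → Matrix (Fin d) (Fin d) ℂ} {S : Matrix (Fin d) (Fin d) ℂ}
    (hx : ∀ n, (x n).PosSemidef) (h : Filter.Tendsto x Filter.atTop (nhds S)) :
    S.PosSemidef := by
  refine Matrix.posSemidef_iff_dotProduct_mulVec.mpr ⟨?_, ?_⟩
  · have h1 : Filter.Tendsto (fun n => (x n)ᴴ) Filter.atTop (nhds Sᴴ) :=
      (Continuous.matrix_conjTranspose continuous_id).continuousAt.tendsto.comp h
    have h2 : (fun n => (x n)ᴴ) = x := funext fun n => (hx n).1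
    rw [h2] at h1
    exact tendsto_nhds_unique h1 h
  · intro v
    have hφ : Continuous fun M : Matrix (Fin d) (Fin d) ℂ =>
        dotProduct (star v) (M *ᵥ v) :=
      (continuous_const.dotProduct ((continuous_id.matrix_mulVec continuous_const)))
    have h3 : Filter.Tendsto (fun n => dotProduct (star v) ((x n) *ᵥ v))
        Filter.atTop (nhds (dotProduct (star v) (S *ᵥ v))) :=
      (hφ.continuousAt.tendsto).comp h
    have hre : ∀ n, 0 ≤ (dotProduct (star v) ((x n) *ᵥ v)).re ∧
        (dotProduct (star v) ((x n) *ᵥ v)).im = 0 := by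
      intro n
      have := (hx n).dotProduct_mulVec_nonneg v
      rw [Complex.le_def] at this
      exact ⟨this.1, this.2.symm⟩
    rw [Complex.le_def]
    refine ⟨?_, ?_⟩
    · simp only [Complex.zero_re]
      exact ge_of_tendsto ((Complex.continuous_re.continuousAt.tendsto).comp h3)
        (Filter.Eventually.of_forall fun n => (hre n).1)
    · have h4 : Filter.Tendsto (fun n => (dotProduct (star v) ((x n) *ᵥ v)).im)
          Filter.atTop (nhds ((dotProduct (star v) (S *ᵥ v)).im)) :=
        (Complex.continuous_im.continuousAt.tendsto).comp h3
      have h5 : (fun n => (dotProduct (star v) ((x n) *ᵥ v)).im) = fun _ => 0 := by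
        ext n; exact (hre n).2
      rw [h5] at h4
      simpa using (tendsto_nhds_unique tendsto_const_nhds h4)

lemma isTest_of_tendsto {x : ℕ → Matrix (Fin d) (Fin d) ℂ} {S : Matrix (Fin d) (Fin d) ℂ}
    (hx : ∀ n, IsTest (x n)) (h : Filter.Tendsto x Filter.atTop (nhds S)) : IsTest S := by
  refine ⟨posSemidef_of_tendsto (fun n => (hx n).1) h, ?_⟩
  have h1 : Filter.Tendsto (fun n => 1 - x n) Filter.atTop (nhds (1 - S)) :=
    Filter.Tendsto.sub tendsto_const_nhds h
  exact posSemidef_of_tendsto (fun n => (hx n).2) h1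

/-- entry bound for uDiag with coefficients bounded by 1 -/
lemma uDiag_entry_bound {B : Matrix (Fin d) (Fin d) ℂ} (hB : B.IsHermitian)
    {c : Fin d → ℝ} (hc : ∀ i, |c i| ≤ 1) (i j : Fin d) :
    ‖uDiag hB c i j‖ ≤ d := by
  have hU : ∀ a k, ‖evU hB a k‖ ≤ 1 := by
    intro a k
    have h1 := congrFun (congrFun (evU_mul_star hB) a) a
    have h2 : (evU hB * star (evU hB)) a a = ∑ m, evU hB a m * star (evU hB a m) := by
      simp [Matrix.mul_apply, Matrix.star_apply, Matrix.star_eq_conjTranspose,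
        Matrix.conjTranspose_apply]
    rw [h2] at h1
    have h3 : ∑ m, Complex.normSq (evU hB a m) = 1 := by
      have := congrArg Complex.re h1
      simpa [Complex.mul_conj, Complex.re_sum] using this
    have h4 : Complex.normSq (evU hB a k) ≤ 1 := by
      rw [← h3]
      exact Finset.single_le_sum (f := fun m => Complex.normSq (evU hB a m))
        (fun m _ => Complex.normSq_nonneg _) (Finset.mem_univ k)
    rw [Complex.norm_def]
    exact Real.sqrt_le_one.mpr h4
  have hentry : uDiag hB c i j
      = ∑ k, evU hB i k * (c k : ℂ) * (starRingEnd ℂ) (evU hB j k) := by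
    simp only [uDiag, Matrix.mul_apply, Matrix.diagonal_apply, Matrix.star_apply,
      Matrix.star_eq_conjTranspose, Matrix.conjTranspose_apply, Finset.sum_ite_eq,
      Finset.mem_univ, if_true, ite_mul, zero_mul, Finset.sum_ite_eq']
    congr 1; ext k
    rw [Finset.sum_eq_single k (fun m _ hm => by rw [if_neg hm, mul_zero])
      (fun hk => absurd (Finset.mem_univ k) hk)]
    rw [if_pos rfl]
    rfl
  rw [hentry]
  calc ‖∑ k, evU hB i k * (c k : ℂ) * (starRingEnd ℂ) (evU hB j k)‖
      ≤ ∑ k, ‖evU hB i k * (c k : ℂ) * (starRingEnd ℂ) (evU hB j k)‖ :=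
        norm_sum_le _ _
    _ ≤ ∑ _k : Fin d, (1 : ℝ) := by
        apply Finset.sum_le_sum
        intro k _
        rw [norm_mul, norm_mul]
        have e1 := hU i k
        have e2 : ‖((c k : ℂ))‖ ≤ 1 := by
          rw [Complex.norm_real, Real.norm_eq_abs]; exact hc k
        have e3 : ‖((starRingEnd ℂ) (evU hB j k))‖ ≤ 1 := by
          rw [Complex.norm_conj]; exact hU j k
        have n1 := norm_nonneg (evU hB i k)
        have n2 := norm_nonneg ((c k : ℂ))
        have n3 := norm_nonneg ((starRingEnd ℂ) (evU hB j k))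
        exact mul_le_one₀ (mul_le_one₀ e1 n2 e2) n3 e3
    _ = d := by simp
end QNP

namespace QNP
variable {d : ℕ}

lemma trace_psd_psd_re_nonneg {N M : Matrix (Fin d) (Fin d) ℂ}
    (hN : N.PosSemidef) (hM : M.PosSemidef) : 0 ≤ ((N * M).trace).re := by
  rw [trace_mul_herm_re hM.1 N]
  exact Finset.sum_nonneg fun i _ =>
    mul_nonneg (wgt_nonneg hM.1 hN i) (hM.eigenvalues_nonneg i)

lemma col_zero {N : Matrix (Fin d) (Fin d) ℂ} (hN : N.PosSemidef) {i : Fin d}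
    (h : N i i = 0) (j : Fin d) : N j i = 0 := by
  have hdot : dotProduct (star (Pi.single i 1)) (N *ᵥ Pi.single i 1) = 0 := by
    have : dotProduct (star (Pi.single i 1 : Fin d → ℂ)) (N *ᵥ Pi.single i 1) = N i i := by
      simp [Matrix.mulVec_single, dotProduct, Pi.single_apply, Finset.sum_ite_eq, mulVec]
    rw [this, h]
  have hz := (hN.dotProduct_mulVec_zero_iff (Pi.single i 1)).mp hdot
  have := congrFun hz j
  simpa [Matrix.mulVec_single] using this

lemma row_zero {N : Matrix (Fin d) (Fin d) ℂ} (hN : N.PosSemidef) {i : Fin d}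
    (h : N i i = 0) (j : Fin d) : N i j = 0 := by
  have h2 : star (N i j) = 0 := by rw [hN.1.apply j i]; exact col_zero hN h j
  exact star_eq_zero.mp h2
end QNP

namespace QNP
variable {d : ℕ} {ρ σ : Matrix (Fin d) (Fin d) ℂ}
section ctx5
variable (hρ : ρ.PosSemidef) (hσ : σ.PosSemidef)

def gg (hρ : ρ.PosSemidef) (hσ : σ.PosSemidef) (t : ℝ) : ℝ := ∑ i, cc hρ hσ t i * rr hρ hσ t i
def pp (hρ : ρ.PosSemidef) (hσ : σ.PosSemidef) (t : ℝ) : ℝ := ∑ i, qq hρ hσ t i * rr hρ hσ t i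

lemma psd_diag_coe {N : Matrix (Fin d) (Fin d) ℂ} (hN : N.PosSemidef) (i : Fin d) :
    N i i = (((N i i).re : ℝ) : ℂ) := by
  have := psd_diag hN i
  rw [Complex.le_def] at this
  apply Complex.ext
  · simp
  · simp [← this.2]

lemma trace_diag_mul_re (c : Fin d → ℝ) (M : Matrix (Fin d) (Fin d) ℂ) :
    ((diagonal (fun i => (c i : ℂ)) * M).trace).re = ∑ i, c i * (M i i).re := by
  rw [Matrix.trace]
  simp only [Matrix.diag, Matrix.diagonal_mul]
  rw [Complex.re_sum]
  congr 1; ext i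
  simp [Complex.mul_re]

lemma proj_rho_trace' (t : ℝ) :
    ((nonnegProj (t • ρ - σ)) * ρ).trace.re = gg hρ hσ t := by
  rw [nonnegProj_eq (hermA hρ hσ t), trace_uDiag_mul]
  rfl

lemma wgt_A_eq_ll (t : ℝ) (i : Fin d) :
    wgt (hermA hρ hσ t) (t • ρ - σ) i = ll hρ hσ t i := by
  rw [wgt, conjM_A]
  simp [ll]

lemma proj_value (t : ℝ) :
    ((nonnegProj (t • ρ - σ)) * (t • ρ - σ)).trace.re = ∑ i, max (ll hρ hσ t i) 0 := by
  rw [nonnegProj_eq (hermA hρ hσ t), trace_uDiag_mul, sum_max_eq hρ hσ t]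
  congr 1; ext i
  rw [wgt_A_eq_ll hρ hσ t i]
  rfl

/-- S is a maximizer of Tr[S A_t] among tests -/
def MaxAt (hρ : ρ.PosSemidef) (hσ : σ.PosSemidef) (t : ℝ) (S : Matrix (Fin d) (Fin d) ℂ) : Prop :=
  IsTest S ∧ ((S * (t • ρ - σ)).trace).re = ∑ i, max (ll hρ hσ t i) 0

lemma wgt_mul_le {B : Matrix (Fin d) (Fin d) ℂ} (hB : B.IsHermitian)
    {T : Matrix (Fin d) (Fin d) ℂ} (hT : IsTest T) (i : Fin d) :
    wgt hB T i * hB.eigenvalues i ≤ max (hB.eigenvalues i) 0 := by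
  rcases le_or_gt 0 (hB.eigenvalues i) with h | h
  · calc wgt hB T i * hB.eigenvalues i ≤ 1 * hB.eigenvalues i :=
        mul_le_mul_of_nonneg_right (wgt_le_one hB hT i) h
     _ = hB.eigenvalues i := one_mul _
     _ ≤ max (hB.eigenvalues i) 0 := le_max_left _ _
  · calc wgt hB T i * hB.eigenvalues i ≤ 0 :=
        mul_nonpos_of_nonneg_of_nonpos (wgt_nonneg hB hT.1 i) h.le
     _ ≤ max (hB.eigenvalues i) 0 := le_max_right _ _

lemma max_bounds {t : ℝ} {S : Matrix (Fin d) (Fin d) ℂ} (hmax : MaxAt hρ hσ t S) :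
    pp hρ hσ t ≤ ((S * ρ).trace).re ∧ ((S * ρ).trace).re ≤ gg hρ hσ t := by
  have hB : (t • ρ - σ).IsHermitian := hermA hρ hσ t
  set S' := conjM hB S with hS'def
  set ρ' := conjM hB ρ with hρ'def
  have hρ' : ρ'.PosSemidef := conjM_posSemidef hB hρ
  have hS'1 : S'.PosSemidef := conjM_posSemidef hB hmax.1.1
  have hone : (1 : Matrix (Fin d) (Fin d) ℂ) - S' = conjM hB (1 - S) := by
    rw [conjM_sub, conjM_one]
  have hS'2 : ((1 : Matrix (Fin d) (Fin d) ℂ) - S').PosSemidef := by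
    rw [hone]; exact conjM_posSemidef hB hmax.1.2
  -- pointwise equality from the maximization
  have hsum : ∑ i, wgt hB S i * hB.eigenvalues i = ∑ i, max (hB.eigenvalues i) 0 := by
    rw [← trace_mul_herm_re hB S]
    exact hmax.2
  have heq : ∀ i ∈ Finset.univ, wgt hB S i * hB.eigenvalues i = max (hB.eigenvalues i) 0 :=
    (Finset.sum_eq_sum_iff_of_le (fun i _ => wgt_mul_le hB hmax.1 i)).mp hsum
  have hdiag_pos : ∀ i, 0 < hB.eigenvalues i → S' i i = 1 := by
    intro i hi
    have h1 := heq i (Finset.mem_univ i)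
    rw [max_eq_left hi.le] at h1
    have h2 : wgt hB S i = 1 := by
      have h3 : wgt hB S i * hB.eigenvalues i = 1 * hB.eigenvalues i := by rw [h1, one_mul]
      exact mul_right_cancel₀ (ne_of_gt hi) h3
    rw [psd_diag_coe hS'1 i]
    have : (S' i i).re = 1 := h2
    rw [this]; norm_num
  have hdiag_neg : ∀ i, hB.eigenvalues i < 0 → S' i i = 0 := by
    intro i hi
    have h1 := heq i (Finset.mem_univ i)
    rw [max_eq_right hi.le] at h1
    have h2 : wgt hB S i = 0 := by
      rcases mul_eq_zero.mp h1 with h | h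
      · exact h
      · exact absurd h (ne_of_lt hi)
    rw [psd_diag_coe hS'1 i]
    have : (S' i i).re = 0 := h2
    rw [this]; norm_num
  -- the kernel indicator
  set kk : Fin d → ℝ := fun i => if hB.eigenvalues i = 0 then 1 else 0 with hkk
  set D0 : Matrix (Fin d) (Fin d) ℂ := diagonal (fun i => (kk i : ℂ)) with hD0
  have hD0herm : D0ᴴ = D0 := by
    rw [hD0, Matrix.diagonal_conjTranspose]
    have : (star fun i => ((kk i : ℝ) : ℂ)) = fun i => ((kk i : ℝ) : ℂ) := by
      funext i
      simp [Pi.star_apply, Complex.star_def, Complex.conj_ofReal]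
    rw [this]
  -- matrix identity
  have hid : S' = diagonal (fun i => (qq hρ hσ t i : ℂ)) + D0 * S' * D0 := by
    ext i j
    have hD0e : (D0 * S' * D0) i j = (kk i : ℂ) * S' i j * (kk j : ℂ) := by
      rw [hD0, Matrix.mul_diagonal, Matrix.diagonal_mul]
    rw [Matrix.add_apply, hD0e]
    rcases lt_trichotomy (hB.eigenvalues i) 0 with hi | hi | hi
    · have hrow := row_zero hS'1 (hdiag_neg i hi) j
      rw [hrow]
      have : qq hρ hσ t i = 0 := by unfold qq cQ; rw [if_neg (not_lt.2 hi.le)]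
      simp [Matrix.diagonal_apply, hkk, hi.ne, this]
    · -- eigenvalue zero row
      have hki : kk i = 1 := by rw [hkk]; simp [hi]
      have hqi : qq hρ hσ t i = 0 := by unfold qq cQ; rw [if_neg (by rw [hi]; exact lt_irrefl 0)]
      rcases lt_trichotomy (hB.eigenvalues j) 0 with hj | hj | hj
      · have hcol := col_zero hS'1 (hdiag_neg j hj) i
        have hkj : kk j = 0 := by rw [hkk]; simp [hj.ne]
        rw [hcol]
        simp [Matrix.diagonal_apply, hqi, hkj]
      · have hkj : kk j = 1 := by rw [hkk]; simp [hj]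
        have hij : ¬ i = j → (diagonal (fun i => (qq hρ hσ t i : ℂ))) i j = 0 := by
          intro h; rw [Matrix.diagonal_apply_ne _ h]
        by_cases hipj : i = j
        · subst hipj
          rw [Matrix.diagonal_apply_eq]
          rw [hki, hqi]
          push_cast
          ring
        · rw [Matrix.diagonal_apply_ne _ hipj, hki, hkj]
          push_cast
          ring
      · -- λ_j > 0 : column j of 1 - S' vanishes
        have hSjj : ((1 : Matrix (Fin d) (Fin d) ℂ) - S') j j = 0 := by
          rw [Matrix.sub_apply, hdiag_pos j hj, Matrix.one_apply_eq, sub_self]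
        have hcol := col_zero hS'2 hSjj i
        have hipj : i ≠ j := by
          intro h; rw [h] at hi; exact lt_irrefl _ (hi ▸ hj)
        have hSij : S' i j = 0 := by
          have h1 : ((1 : Matrix (Fin d) (Fin d) ℂ) - S') i j = 0 := hcol
          rw [Matrix.sub_apply, Matrix.one_apply_ne hipj] at h1
          linear_combination -h1
        have hkj : kk j = 0 := by rw [hkk]; simp [hj.ne']
        rw [hSij, Matrix.diagonal_apply_ne _ hipj, hkj]
        push_cast
        ring
    · -- λ_i > 0 : row i of 1 - S' vanishes
      have hSii : ((1 : Matrix (Fin d) (Fin d) ℂ) - S') i i = 0 := by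
        rw [Matrix.sub_apply, hdiag_pos i hi, Matrix.one_apply_eq, sub_self]
      have hrow := row_zero hS'2 hSii j
      have hSij : S' i j = (1 : Matrix (Fin d) (Fin d) ℂ) i j := by
        rw [Matrix.sub_apply] at hrow
        linear_combination -hrow
      have hki : kk i = 0 := by rw [hkk]; simp [hi.ne']
      have hqi : qq hρ hσ t i = 1 := by unfold qq cQ; rw [if_pos hi]
      by_cases hipj : i = j
      · subst hipj
        rw [hSij, Matrix.diagonal_apply_eq, Matrix.one_apply_eq, hqi, hki]
        push_cast; ring
      · rw [hSij, Matrix.diagonal_apply_ne _ hipj, Matrix.one_apply_ne hipj, hki]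
        push_cast; ring
  -- trace identity
  have htr : ((S * ρ).trace).re = ((S' * ρ').trace).re := by
    rw [hS'def, hρ'def, ← conjM_mul hB, conjM_trace hB]
  have hsplit : ((S' * ρ').trace).re
      = ((diagonal (fun i => (qq hρ hσ t i : ℂ)) * ρ').trace).re
        + (((D0 * S' * D0) * ρ').trace).re := by
    conv_lhs => rw [hid]
    rw [Matrix.add_mul, Matrix.trace_add, Complex.add_re]
  have hfirst : ((diagonal (fun i => (qq hρ hσ t i : ℂ)) * ρ').trace).re = pp hρ hσ t := by
    rw [trace_diag_mul_re]
    rfl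
  -- PSD facts
  have hD0SD0 : (D0 * S' * D0).PosSemidef := by
    have := hS'1.mul_mul_conjTranspose_same (B := D0)
    rwa [hD0herm] at this
  have hlow : 0 ≤ (((D0 * S' * D0) * ρ').trace).re := trace_psd_psd_re_nonneg hD0SD0 hρ'
  have hD0D0 : D0 * D0 = D0 := by
    have hf : (fun i => ((kk i : ℝ) : ℂ) * ((kk i : ℝ) : ℂ)) = fun i => ((kk i : ℝ) : ℂ) := by
      funext i
      rw [hkk]
      by_cases h : hB.eigenvalues i = 0 <;> simp [h]
    rw [hD0, Matrix.diagonal_mul_diagonal, hf]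
  have hcompl : (D0 - D0 * S' * D0).PosSemidef := by
    have h1 := hS'2.mul_mul_conjTranspose_same (B := D0)
    rw [hD0herm] at h1
    have h2 : D0 * (1 - S') * D0 = D0 - D0 * S' * D0 := by
      rw [Matrix.mul_sub, Matrix.mul_one, Matrix.sub_mul, hD0D0]
    rwa [h2] at h1
  have hup : (((D0 * S' * D0) * ρ').trace).re ≤ ((D0 * ρ').trace).re := by
    have h1 := trace_psd_psd_re_nonneg hcompl hρ'
    rw [Matrix.sub_mul, Matrix.trace_sub, Complex.sub_re] at h1
    linarith
  have hD0tr : ((D0 * ρ').trace).re = ∑ i, kk i * rr hρ hσ t i := by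
    rw [hD0, trace_diag_mul_re]
    rfl
  have hkkrr : ∑ i, kk i * rr hρ hσ t i = gg hρ hσ t - pp hρ hσ t := by
    rw [gg, pp, ← Finset.sum_sub_distrib]
    congr 1; ext i
    have : kk i = cc hρ hσ t i - qq hρ hσ t i := by
      rw [hkk]; unfold cc qq cP cQ
      rcases lt_trichotomy (hB.eigenvalues i) 0 with h | h | h
      · show (if (hermA hρ hσ t).eigenvalues i = 0 then (1:ℝ) else 0) = _
        simp [show (hermA hρ hσ t).eigenvalues i < 0 from h, h.ne, not_le.2 h, not_lt.2 h.le]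
      · show (if (hermA hρ hσ t).eigenvalues i = 0 then (1:ℝ) else 0) = _
        simp [show (hermA hρ hσ t).eigenvalues i = 0 from h, h]
      · show (if (hermA hρ hσ t).eigenvalues i = 0 then (1:ℝ) else 0) = _
        simp [show (0:ℝ) < (hermA hρ hσ t).eigenvalues i from h, h.ne', h.le]
    rw [this]; ring
  constructor
  · rw [htr, hsplit, hfirst]; linarith
  · rw [htr, hsplit, hfirst]
    rw [hD0tr, hkkrr] at hup
    linarith
end ctx5
end QNP

namespace QNP
variable {d : ℕ} {ρ σ : Matrix (Fin d) (Fin d) ℂ}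

lemma exists_conv_subseq {x : ℕ → Matrix (Fin d) (Fin d) ℂ}
    (hb : ∀ n i j, ‖x n i j‖ ≤ (d : ℝ)) :
    ∃ S : Matrix (Fin d) (Fin d) ℂ, ∃ φ : ℕ → ℕ, StrictMono φ ∧
      Filter.Tendsto (x ∘ φ) Filter.atTop (nhds S) := by
  set K : Set (Matrix (Fin d) (Fin d) ℂ) :=
    Set.univ.pi fun _ : Fin d => Set.univ.pi fun _ : Fin d => Metric.closedBall (0 : ℂ) d
    with hKdef
  have hK : IsCompact K :=
    isCompact_univ_pi fun _ => isCompact_univ_pi fun _ => isCompact_closedBall _ _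
  have hmem : ∀ n, x n ∈ K := by
    intro n
    rw [hKdef]
    refine Set.mem_univ_pi.2 ?_
    intro i
    rw [Set.mem_univ_pi]
    intro j
    rw [Metric.mem_closedBall, Complex.dist_eq, sub_zero]
    exact hb n i j
  haveI : FirstCountableTopology (Matrix (Fin d) (Fin d) ℂ) :=
    inferInstanceAs (FirstCountableTopology (Fin d → Fin d → ℂ))
  obtain ⟨S, _, φ, hφ, hconv⟩ := hK.tendsto_subseq hmem
  exact ⟨S, φ, hφ, hconv⟩

section ctx6
variable (hρ : ρ.PosSemidef) (hσ : σ.PosSemidef)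

lemma proj_entry_bound (hρ : ρ.PosSemidef) (hσ : σ.PosSemidef) (t : ℝ) (i j : Fin d) :
    ‖nonnegProj (t • ρ - σ) i j‖ ≤ (d : ℝ) := by
  rw [nonnegProj_eq (hermA hρ hσ t)]
  apply uDiag_entry_bound
  intro k
  unfold cP
  split <;> norm_num

lemma one_sub_gg (hρtr : ρ.trace = 1) (t : ℝ) :
    ∑ i, (1 - cc hρ hσ t i) * rr hρ hσ t i = 1 - gg hρ hσ t := by
  have e1 : ∑ i, (1 - cc hρ hσ t i) * rr hρ hσ t i
      = (∑ i, rr hρ hσ t i) - ∑ i, cc hρ hσ t i * rr hρ hσ t i := by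
    rw [← Finset.sum_sub_distrib]; congr 1; ext i; ring
  rw [e1, sum_rr hρ hσ hρtr t]
  rfl

lemma t_mul_one_sub_gg_le (hσtr : σ.trace = 1) (t : ℝ) :
    t * (∑ i, (1 - cc hρ hσ t i) * rr hρ hσ t i) ≤ 1 := by
  have h1 : ∀ i, t * ((1 - cc hρ hσ t i) * rr hρ hσ t i) ≤ (1 - cc hρ hσ t i) * ss hρ hσ t i := by
    intro i
    unfold cc cP
    rcases le_or_gt 0 ((hermA hρ hσ t).eigenvalues i) with h | h
    · rw [if_pos h]; simp
    · rw [if_neg (not_le.2 h)]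
      have h2 := ll_eq hρ hσ t i
      unfold ll at h2
      have h3 : t * rr hρ hσ t i - ss hρ hσ t i < 0 := by rw [← h2]; exact h
      nlinarith
  calc t * (∑ i, (1 - cc hρ hσ t i) * rr hρ hσ t i)
      = ∑ i, t * ((1 - cc hρ hσ t i) * rr hρ hσ t i) := Finset.mul_sum _ _ _
    _ ≤ ∑ i, (1 - cc hρ hσ t i) * ss hρ hσ t i := Finset.sum_le_sum fun i _ => h1 i
    _ ≤ ∑ i, ss hρ hσ t i := by
        apply Finset.sum_le_sum
        intro i _
        rcases cc_mem hρ hσ t i with h | h <;> rw [h] <;>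
          simpa using ss_nonneg hρ hσ t i
    _ = 1 := sum_ss hρ hσ hσtr t

lemma pp_zero : pp hρ hσ 0 = 0 := by
  rw [pp]
  apply Finset.sum_eq_zero
  intro i _
  have h1 := ll_eq hρ hσ 0 i
  unfold ll at h1
  have h2 : (hermA hρ hσ 0).eigenvalues i ≤ 0 := by
    rw [h1]
    have := ss_nonneg hρ hσ 0 i
    linarith
  unfold qq cQ
  rw [if_neg (not_lt.2 h2), zero_mul]

lemma maxAt_of_tendsto {t : ℕ → ℝ} {t₀ : ℝ} (hconv : Filter.Tendsto t Filter.atTop (nhds t₀))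
    {S : Matrix (Fin d) (Fin d) ℂ}
    (hS : Filter.Tendsto (fun n => nonnegProj (t n • ρ - σ)) Filter.atTop (nhds S)) :
    MaxAt hρ hσ t₀ S := by
  have htest : ∀ n, IsTest (nonnegProj (t n • ρ - σ)) := fun n => proj_isTest hρ hσ (t n)
  have hStest : IsTest S := isTest_of_tendsto htest hS
  have hxρ : Filter.Tendsto (fun n => ((nonnegProj (t n • ρ - σ) * ρ).trace).re)
      Filter.atTop (nhds (((S * ρ).trace).re)) :=
    ((cont_traceMul ρ).continuousAt.tendsto).comp hS
  have hxσ : Filter.Tendsto (fun n => ((nonnegProj (t n • ρ - σ) * σ).trace).re)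
      Filter.atTop (nhds (((S * σ).trace).re)) :=
    ((cont_traceMul σ).continuousAt.tendsto).comp hS
  have hval : Filter.Tendsto (fun n => ∑ i, max (ll hρ hσ (t n) i) 0)
      Filter.atTop (nhds (((S * (t₀ • ρ - σ)).trace).re)) := by
    have h1 : (fun n => ∑ i, max (ll hρ hσ (t n) i) 0)
        = fun n => t n * ((nonnegProj (t n • ρ - σ) * ρ).trace).re
          - ((nonnegProj (t n • ρ - σ) * σ).trace).re := by
      funext n
      rw [← proj_value hρ hσ (t n), trace_mul_A_re]
    rw [h1, trace_mul_A_re]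
    exact (hconv.mul hxρ).sub hxσ
  have hw : Filter.Tendsto (fun n => ((nonnegProj (t₀ • ρ - σ) * (t n • ρ - σ)).trace).re)
      Filter.atTop (nhds (∑ i, max (ll hρ hσ t₀ i) 0)) := by
    have h1 : (fun n => ((nonnegProj (t₀ • ρ - σ) * (t n • ρ - σ)).trace).re)
        = fun n => t n * ((nonnegProj (t₀ • ρ - σ) * ρ).trace).re
          - ((nonnegProj (t₀ • ρ - σ) * σ).trace).re := by
      funext n; rw [trace_mul_A_re]
    rw [h1, ← proj_value hρ hσ t₀, trace_mul_A_re]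
    exact (hconv.mul tendsto_const_nhds).sub tendsto_const_nhds
  have hle : ∀ n, ((nonnegProj (t₀ • ρ - σ) * (t n • ρ - σ)).trace).re
      ≤ ∑ i, max (ll hρ hσ (t n) i) 0 :=
    fun n => trace_test_le (hermA hρ hσ (t n)) (proj_isTest hρ hσ t₀)
  have hlower : ∑ i, max (ll hρ hσ t₀ i) 0 ≤ ((S * (t₀ • ρ - σ)).trace).re :=
    le_of_tendsto_of_tendsto' hw hval hle
  have hupper : ((S * (t₀ • ρ - σ)).trace).re ≤ ∑ i, max (ll hρ hσ t₀ i) 0 :=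
    trace_test_le (hermA hρ hσ t₀) hStest
  exact ⟨hStest, le_antisymm hupper hlower⟩

end ctx6
end QNP

namespace QNP
variable {d : ℕ} {ρ σ : Matrix (Fin d) (Fin d) ℂ}
section ctx7
variable (hρ : ρ.PosSemidef) (hσ : σ.PosSemidef)

lemma pp_le_gg (t : ℝ) : pp hρ hσ t ≤ gg hρ hσ t :=
  Finset.sum_le_sum fun i _ =>
    mul_le_mul_of_nonneg_right (qq_le_cc hρ hσ t i) (rr_nonneg hρ hσ t i)

lemma gap_eq (t : ℝ) :
    ∑ i, (cc hρ hσ t i - qq hρ hσ t i) * rr hρ hσ t i = gg hρ hσ t - pp hρ hσ t := by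
  rw [gg, pp, ← Finset.sum_sub_distrib]
  congr 1; ext i; ring

lemma one_sub_cc_rr_nonneg (t : ℝ) : 0 ≤ ∑ i, (1 - cc hρ hσ t i) * rr hρ hσ t i := by
  apply Finset.sum_nonneg
  intro i _
  apply mul_nonneg _ (rr_nonneg hρ hσ t i)
  rcases cc_mem hρ hσ t i with h | h <;> rw [h] <;> norm_num

lemma trace_one_sub_mul (M X : Matrix (Fin d) (Fin d) ℂ) :
    (((1 - X) * M).trace).re = M.trace.re - ((X * M).trace).re := by
  rw [Matrix.sub_mul, Matrix.one_mul, Matrix.trace_sub, Complex.sub_re]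

lemma achieve (hρtr : ρ.trace = 1) (hσtr : σ.trace = 1)
    {α β : ℝ} (hα0 : 0 ≤ α) (hα1 : α ≤ 1)
    (hub : ∀ t : ℝ, 0 ≤ t → ff hρ hσ α t ≤ β) :
    ∃ T : Matrix (Fin d) (Fin d) ℂ, IsTest T ∧ ((T * ρ).trace).re ≤ α ∧
      1 - ((T * σ).trace).re ≤ β := by
  by_cases hG : ∃ t : ℝ, 0 ≤ t ∧ 1 - α ≤ gg hρ hσ t
  · -- the infimum threshold
    set G : Set ℝ := {t | 0 ≤ t ∧ 1 - α ≤ gg hρ hσ t} with hGdef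
    have hGne : G.Nonempty := hG
    have hGbdd : BddBelow G := ⟨0, fun t ht => ht.1⟩
    set t₀ := sInf G with ht₀def
    have ht₀0 : 0 ≤ t₀ := le_csInf hGne fun t ht => ht.1
    have hA : 1 - α ≤ gg hρ hσ t₀ := by
      have hu : ∀ n : ℕ, ∃ u, u ∈ G ∧ u < t₀ + 1 / (n + 1) := by
        intro n
        apply exists_lt_of_csInf_lt hGne
        have : 0 < 1 / ((n : ℝ) + 1) := by positivity
        linarith
      choose u huG hult using hu
      have huge : ∀ n, t₀ ≤ u n := fun n => csInf_le hGbdd (huG n)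
      have huconv : Filter.Tendsto u Filter.atTop (nhds t₀) := by
        have h1 : Filter.Tendsto (fun n : ℕ => t₀ + 1 / ((n : ℝ) + 1)) Filter.atTop
            (nhds (t₀ + 0)) :=
          tendsto_const_nhds.add tendsto_one_div_add_atTop_nhds_zero_nat
        rw [add_zero] at h1
        exact tendsto_of_tendsto_of_tendsto_of_le_of_le tendsto_const_nhds h1 huge
          fun n => (hult n).le
      obtain ⟨S, φ, hφ, hconv⟩ := exists_conv_subseq
        (x := fun n => nonnegProj (u n • ρ - σ)) (fun n => proj_entry_bound hρ hσ (u n))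
      have hucomp : Filter.Tendsto (u ∘ φ) Filter.atTop (nhds t₀) :=
        huconv.comp hφ.tendsto_atTop
      have hmax : MaxAt hρ hσ t₀ S := maxAt_of_tendsto hρ hσ hucomp hconv
      have hb := (max_bounds hρ hσ hmax).2
      have h2 : Filter.Tendsto (fun n => ((nonnegProj (u (φ n) • ρ - σ) * ρ).trace).re)
          Filter.atTop (nhds (((S * ρ).trace).re)) :=
        ((cont_traceMul ρ).continuousAt.tendsto).comp hconv
      have h3 : 1 - α ≤ ((S * ρ).trace).re :=
        ge_of_tendsto h2 (Filter.Eventually.of_forall fun n => by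
          rw [proj_rho_trace' hρ hσ]; exact (huG (φ n)).2)
      linarith
    have hBB : pp hρ hσ t₀ ≤ 1 - α := by
      rcases eq_or_lt_of_le ht₀0 with h0 | h0
      · rw [← h0, pp_zero hρ hσ]; linarith
      · set w : ℕ → ℝ := fun n => t₀ - t₀ / (n + 2) with hwdef
        have hw0 : ∀ n : ℕ, 0 ≤ w n := by
          intro n
          have : t₀ / ((n : ℝ) + 2) ≤ t₀ := by
            apply div_le_self ht₀0
            have : (0:ℝ) ≤ (n:ℝ) := Nat.cast_nonneg n
            linarith
          simp only [hwdef]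
          linarith
        have hwlt : ∀ n : ℕ, w n < t₀ := by
          intro n
          have : 0 < t₀ / ((n : ℝ) + 2) := by positivity
          simp only [hwdef]
          linarith
        have hwg : ∀ n, gg hρ hσ (w n) < 1 - α := by
          intro n
          by_contra h
          have hmem : w n ∈ G := ⟨hw0 n, not_lt.1 h⟩
          exact absurd (csInf_le hGbdd hmem) (not_le.2 (hwlt n))
        have hwconv : Filter.Tendsto w Filter.atTop (nhds t₀) := by
          have h1 : Filter.Tendsto (fun n : ℕ => ((n : ℝ) + 2)) Filter.atTop Filter.atTop :=
            Filter.tendsto_atTop_add_const_right _ 2 tendsto_natCast_atTop_atTop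
          have h2 : Filter.Tendsto (fun n : ℕ => t₀ / ((n : ℝ) + 2)) Filter.atTop (nhds 0) :=
            Filter.Tendsto.div_atTop tendsto_const_nhds h1
          have h3 := tendsto_const_nhds.sub h2 (f := fun _ : ℕ => t₀)
          rw [sub_zero] at h3
          exact h3
        obtain ⟨S, φ, hφ, hconv⟩ := exists_conv_subseq
          (x := fun n => nonnegProj (w n • ρ - σ)) (fun n => proj_entry_bound hρ hσ (w n))
        have hwcomp : Filter.Tendsto (w ∘ φ) Filter.atTop (nhds t₀) :=
          hwconv.comp hφ.tendsto_atTop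
        have hmax : MaxAt hρ hσ t₀ S := maxAt_of_tendsto hρ hσ hwcomp hconv
        have hb := (max_bounds hρ hσ hmax).1
        have h2 : Filter.Tendsto (fun n => ((nonnegProj (w (φ n) • ρ - σ) * ρ).trace).re)
            Filter.atTop (nhds (((S * ρ).trace).re)) :=
          ((cont_traceMul ρ).continuousAt.tendsto).comp hconv
        have h3 : ((S * ρ).trace).re ≤ 1 - α :=
          le_of_tendsto h2 (Filter.Eventually.of_forall fun n => by
            rw [proj_rho_trace' hρ hσ]; exact (hwg (φ n)).le)
        linarith
    -- choose the randomization parameter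
    have hΔ0 : 0 ≤ gg hρ hσ t₀ - pp hρ hσ t₀ := by linarith [pp_le_gg hρ hσ t₀]
    by_cases h : gg hρ hσ t₀ - pp hρ hσ t₀ = 0
    · have hμα : (∑ i, (1 - cc hρ hσ t₀ i) * rr hρ hσ t₀ i)
          + 0 * (∑ i, (cc hρ hσ t₀ i - qq hρ hσ t₀ i) * rr hρ hσ t₀ i) = α := by
        rw [one_sub_gg hρ hσ hρtr t₀, gap_eq hρ hσ t₀, zero_mul, add_zero]
        linarith
      obtain ⟨T, hT, hTρ, hTσ⟩ := achieve_at hρ hσ hρtr hσtr ht₀0 (le_refl (0:ℝ))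
        (by norm_num) hμα
      exact ⟨T, hT, hTρ, by rw [hTσ]; exact hub t₀ ht₀0⟩
    · have hΔpos : 0 < gg hρ hσ t₀ - pp hρ hσ t₀ := lt_of_le_of_ne hΔ0 (Ne.symm h)
      set μ : ℝ := (α - (1 - gg hρ hσ t₀)) / (gg hρ hσ t₀ - pp hρ hσ t₀) with hμdef
      have hμ0 : 0 ≤ μ := div_nonneg (by linarith) hΔ0
      have hμ1 : μ ≤ 1 := by
        rw [hμdef, div_le_one hΔpos]
        linarith
      have hμα : (∑ i, (1 - cc hρ hσ t₀ i) * rr hρ hσ t₀ i)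
          + μ * (∑ i, (cc hρ hσ t₀ i - qq hρ hσ t₀ i) * rr hρ hσ t₀ i) = α := by
        rw [one_sub_gg hρ hσ hρtr t₀, gap_eq hρ hσ t₀, hμdef,
          div_mul_cancel₀ _ (by exact h)]
        ring
      obtain ⟨T, hT, hTρ, hTσ⟩ := achieve_at hρ hσ hρtr hσtr ht₀0 hμ0 hμ1 hμα
      exact ⟨T, hT, hTρ, by rw [hTσ]; exact hub t₀ ht₀0⟩
  · -- no threshold : α must be 0 and we take a limit of projectors
    push_neg at hG
    have hα : α = 0 := by
      by_contra hne
      have hαpos : 0 < α := lt_of_le_of_ne hα0 (Ne.symm hne)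
      have ht : (0:ℝ) ≤ 2 / α := by positivity
      have h1 := t_mul_one_sub_gg_le hρ hσ hσtr (2 / α)
      rw [one_sub_gg hρ hσ hρtr] at h1
      have h2 := hG (2 / α) ht
      have h3 : 0 < 2 / α := by positivity
      have h4 : (2 / α) * α < (2 / α) * (1 - gg hρ hσ (2 / α)) :=
        mul_lt_mul_of_pos_left (by linarith) h3
      have h5 : (2 / α) * α = 2 := by field_simp
      linarith
    subst hα
    set t : ℕ → ℝ := fun n => (n : ℝ) + 1 with htdef
    have ht0 : ∀ n, 0 ≤ t n := by
      intro n
      simp only [htdef]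
      positivity
    obtain ⟨S, φ, hφ, hconv⟩ := exists_conv_subseq
      (x := fun n => nonnegProj (t n • ρ - σ)) (fun n => proj_entry_bound hρ hσ (t n))
    have hStest : IsTest S :=
      isTest_of_tendsto (fun n => proj_isTest hρ hσ (t (φ n))) hconv
    refine ⟨1 - S, ⟨hStest.2, by simpa using hStest.1⟩, ?_, ?_⟩
    · -- type-I error ≤ 0
      have hbound : ∀ n, (((1 - nonnegProj (t (φ n) • ρ - σ)) * ρ).trace).re ≤ 1 / t (φ n) := by
        intro n
        have h1 := t_mul_one_sub_gg_le hρ hσ hσtr (t (φ n))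
        rw [proj_rho_trace hρ hσ]
        have h2 : 0 < t (φ n) := by
          simp only [htdef]
          positivity
        rw [le_div_iff₀ h2]
        linarith [h1]
      have htr : Filter.Tendsto (fun n => (((1 - nonnegProj (t (φ n) • ρ - σ)) * ρ).trace).re)
          Filter.atTop (nhds ((((1 - S) * ρ).trace).re)) := by
        have hmt : Filter.Tendsto (fun n => (1 : Matrix (Fin d) (Fin d) ℂ)
            - nonnegProj (t (φ n) • ρ - σ)) Filter.atTop (nhds (1 - S)) :=
          tendsto_const_nhds.sub hconv
        exact ((cont_traceMul ρ).continuousAt.tendsto).comp hmt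
      have hz : Filter.Tendsto (fun n => 1 / t (φ n)) Filter.atTop (nhds 0) := by
        have h1 : Filter.Tendsto (fun n : ℕ => t (φ n)) Filter.atTop Filter.atTop :=
          (Filter.tendsto_atTop_add_const_right _ 1 tendsto_natCast_atTop_atTop).comp
            hφ.tendsto_atTop
        exact Filter.Tendsto.div_atTop tendsto_const_nhds h1
      exact le_of_tendsto_of_tendsto' htr hz hbound
    · -- type-II error bound
      have heq : 1 - (((1 - S) * σ).trace).re = ((S * σ).trace).re := by
        rw [trace_one_sub_mul, hσtr]
        simp
      rw [heq]
      have hbound : ∀ n, ((nonnegProj (t (φ n) • ρ - σ) * σ).trace).re ≤ β := by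
        intro n
        have h1 := hub (t (φ n)) (ht0 (φ n))
        rw [← ff_stmt hρ hσ] at h1
        have h2 : 0 ≤ t (φ n) * (((1 - nonnegProj (t (φ n) • ρ - σ)) * ρ).trace).re :=
          mul_nonneg (ht0 (φ n)) (by
            rw [proj_rho_trace hρ hσ]
            exact one_sub_cc_rr_nonneg hρ hσ (t (φ n)))
        rw [sub_zero] at h1
        linarith
      have htrσ : Filter.Tendsto (fun n => ((nonnegProj (t (φ n) • ρ - σ) * σ).trace).re)
          Filter.atTop (nhds (((S * σ).trace).re)) :=
        ((cont_traceMul σ).continuousAt.tendsto).comp hconv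
      exact le_of_tendsto htrσ (Filter.Eventually.of_forall hbound)
end ctx7
end QNP

open QNP

/-- Variational characterization of the quantum error trade-off (Lemma 1):
`β_α(ρ,σ) = sup_{t ≥ 0} { Tr[σ Π_t] + t (Tr[ρ (I − Π_t)] − α) }`. -/
theorem quantum_tradeoff_variational {d : ℕ} (ρ σ : Matrix (Fin d) (Fin d) ℂ)
    (hρ : ρ.PosSemidef) (hρtr : ρ.trace = 1)
    (hσ : σ.PosSemidef) (hσtr : σ.trace = 1)
    (α : ℝ) (hα : α ∈ Set.Icc (0 : ℝ) 1) :
    qBeta α ρ σ =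
      sSup { v : ℝ | ∃ t : ℝ, 0 ≤ t ∧
        v = ((nonnegProj (t • ρ - σ)) * σ).trace.re
            + t * (((1 - nonnegProj (t • ρ - σ)) * ρ).trace.re - α) } := by
  obtain ⟨hα0, hα1⟩ := hα
  set S₁ : Set ℝ := { b : ℝ | ∃ T : Matrix (Fin d) (Fin d) ℂ,
    T.PosSemidef ∧ (1 - T).PosSemidef ∧ ((T * ρ).trace.re ≤ α) ∧
    b = 1 - (T * σ).trace.re } with hS₁
  set S₂ : Set ℝ := { v : ℝ | ∃ t : ℝ, 0 ≤ t ∧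
        v = ((nonnegProj (t • ρ - σ)) * σ).trace.re
            + t * (((1 - nonnegProj (t • ρ - σ)) * ρ).trace.re - α) } with hS₂
  have htr_re : ∀ (M : Matrix (Fin d) (Fin d) ℂ), (M.trace).re = ∑ i, (M i i).re := by
    intro M
    rw [Matrix.trace]
    exact Complex.re_sum _ _
  -- the constant test α • 1
  have hmem1 : (1 - α) ∈ S₁ := by
    refine ⟨diagonal (fun _ => (α : ℂ)), ?_, ?_, ?_, ?_⟩
    · exact Matrix.PosSemidef.diagonal fun i => Complex.zero_le_real.2 hα0
    · have : (1 : Matrix (Fin d) (Fin d) ℂ) - diagonal (fun _ => (α : ℂ))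
          = diagonal (fun _ => ((1 - α : ℝ) : ℂ)) := by
        rw [← Matrix.diagonal_one, Matrix.diagonal_sub]
        congr 1; funext i; push_cast; ring
      rw [this]
      exact Matrix.PosSemidef.diagonal fun i => Complex.zero_le_real.2 (by linarith)
    · rw [trace_diag_mul_re (c := fun _ => α) ρ, ← Finset.mul_sum, ← htr_re, hρtr]
      simp
    · rw [trace_diag_mul_re (c := fun _ => α) σ, ← Finset.mul_sum, ← htr_re, hσtr]
      simp
  have hv₀ : (((nonnegProj ((0:ℝ) • ρ - σ)) * σ).trace.re
      + 0 * (((1 - nonnegProj ((0:ℝ) • ρ - σ)) * ρ).trace.re - α)) ∈ S₂ :=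
    ⟨0, le_refl 0, rfl⟩
  have hW : ∀ b ∈ S₁, ∀ v ∈ S₂, v ≤ b := by
    rintro b ⟨T, hT1, hT2, hTρ, rfl⟩ v ⟨t, ht, rfl⟩
    rw [ff_stmt hρ hσ]
    exact weak_duality hρ hσ hρtr hσtr ht ⟨hT1, hT2⟩ hTρ
  have hbdd2 : BddAbove S₂ := ⟨1 - α, fun v hv => hW _ hmem1 v hv⟩
  have hbdd1 : BddBelow S₁ := ⟨_, fun b hb => hW b hb _ hv₀⟩
  have hne2 : S₂.Nonempty := ⟨_, hv₀⟩
  apply le_antisymm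
  · -- sInf S₁ ≤ sSup S₂ via achievability
    have hub : ∀ t : ℝ, 0 ≤ t → ff hρ hσ α t ≤ sSup S₂ := by
      intro t ht
      rw [← ff_stmt hρ hσ]
      exact le_csSup hbdd2 ⟨t, ht, rfl⟩
    obtain ⟨T, hT, hTρ, hTb⟩ := achieve hρ hσ hρtr hσtr hα0 hα1 hub
    have hmem : (1 - ((T * σ).trace).re) ∈ S₁ := ⟨T, hT.1, hT.2, hTρ, rfl⟩
    exact le_trans (csInf_le hbdd1 hmem) hTb
  · exact le_csInf ⟨_, hmem1⟩ fun b hb => csSup_le hne2 fun v hv => hW b hb v hv
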